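/- Suppose f : ℝ → ℝ is continuous, bounded, strictly increasing, with 0 ≤ f(x) ≤ M for all x, g : ℝ → ℝ satisfies g(f(x)) = x for all x with r ↦ |g(r)| integrable on (0,M), and suppose ρ(x) > 0 for every x ∈ ℝ^N. Then the Lyapunov functional F(u) = ∫_{ℝ^N} [ -½ f(u(x)) (J *_ρ (f∘u))(x) + ∫₀^{f(u(x))} g(r) dr - h(x) f(u(x)) ] ρ(x) dx is continuous on C_ρ(ℝ^N): if u_n, u are continuous with ‖u_n‖_ρ, ‖u‖_ρ < ∞ and ‖u_n - u‖_ρ → 0, then F(u_n) → F(u). -/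

import Mathlib

open MeasureTheory Real

/-- The weighted convolution `(J *_ρ v)(x) = ∫ J(x-y) v(y) ρ(y) dy` on `ℝ^N`. -/
noncomputable def convW {N : ℕ} (J ρ v : (Fin N → ℝ) → ℝ) (x : Fin N → ℝ) : ℝ :=
  ∫ y, J (x - y) * v y * ρ y

/-- The Lyapunov functional
`F(u) = ∫ [ -½ f(u(x)) (J *_ρ (f∘u))(x) + ∫₀^{f(u(x))} g(r) dr - h(x) f(u(x)) ] ρ(x) dx`,
where `g` is (an extension of) `f⁻¹`. -/
noncomputable def lyap {N : ℕ} (J ρ h : (Fin N → ℝ) → ℝ) (f g : ℝ → ℝ)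
    (u : (Fin N → ℝ) → ℝ) : ℝ :=
  ∫ x, (-(1/2) * f (u x) * convW J ρ (fun y => f (u y)) x
    + (∫ r in (0:ℝ)..(f (u x)), g r) - h x * f (u x)) * ρ x

/-- with `ρ` strictly positive, the Lyapunov functional is continuous on
`C_ρ(ℝ^N)`: if `‖u_n - u‖_ρ → 0` then `F(u_n) → F(u)`. -/
theorem lyapunov_functional_continuous {N : ℕ} (hN : 1 ≤ N)
    (J ρ h : (Fin N → ℝ) → ℝ)
    (hJint : Integrable J) (hJpos : ∀ x, 0 ≤ J x)
    (hρcont : Continuous ρ) (hρpos : ∀ x, 0 < ρ x)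
    (hρbdd : BddAbove (Set.range ρ)) (hρint : Integrable ρ)
    (hhcont : Continuous h) (hhbdd : BddAbove (Set.range fun x => |h x|))
    (f g : ℝ → ℝ) (hfc : Continuous f) (hfmono : StrictMono f)
    (M : ℝ) (hf0 : ∀ x : ℝ, 0 ≤ f x) (hfM : ∀ x : ℝ, f x ≤ M)
    (hg : ∀ x : ℝ, g (f x) = x)
    (hgint : IntervalIntegrable (fun r => |g r|) volume 0 M)
    (U : ℕ → (Fin N → ℝ) → ℝ) (u : (Fin N → ℝ) → ℝ)
    (hUc : ∀ n, Continuous (U n))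
    (hUb : ∀ n, BddAbove (Set.range fun x => |U n x| * ρ x))
    (huc : Continuous u)
    (hub : BddAbove (Set.range fun x => |u x| * ρ x))
    (hconv : ∀ ε : ℝ, 0 < ε → ∃ n₀ : ℕ, ∀ n ≥ n₀, ∀ x, |U n x - u x| * ρ x ≤ ε) :
    Filter.Tendsto (fun n => lyap J ρ h f g (U n)) Filter.atTop
      (nhds (lyap J ρ h f g u)) := by
  classical
  obtain ⟨Cρ, hCρ'⟩ := hρbdd
  have hCρ : ∀ x, ρ x ≤ Cρ := fun x => hCρ' (Set.mem_range_self x)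
  have hCρ0 : 0 ≤ Cρ := le_trans (hρpos 0).le (hCρ 0)
  obtain ⟨Ch, hCh'⟩ := hhbdd
  have hCh : ∀ x, |h x| ≤ Ch := fun x => hCh' (Set.mem_range_self x)
  have hCh0 : 0 ≤ Ch := le_trans (abs_nonneg _) (hCh 0)
  have hM0 : 0 ≤ M := le_trans (hf0 0) (hfM 0)
  set KJ : ℝ := ∫ x, J x with hKJdef
  have hKJ0 : 0 ≤ KJ := integral_nonneg hJpos
  have hKJ : ∀ x : Fin N → ℝ, (∫ y, J (x - y)) = KJ :=
    fun x => integral_sub_left_eq_self J volume x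
  set Cg : ℝ := ∫ r in (0:ℝ)..M, |g r| with hCgdef
  set I : ℝ → ℝ := fun t => ∫ r in (0:ℝ)..t, g r with hIdef
  have habs_g_on : IntegrableOn (fun r => |g r|) (Set.Ioc 0 M) volume :=
    (intervalIntegrable_iff_integrableOn_Ioc_of_le hM0).mp hgint
  have hCgIoc : Cg = ∫ r in Set.Ioc 0 M, |g r| := intervalIntegral.integral_of_le hM0
  have hCg0 : 0 ≤ Cg := by
    rw [hCgIoc]; exact setIntegral_nonneg measurableSet_Ioc (fun r _ => abs_nonneg _)
  -- pointwise convergence of U n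
  have hUptw : ∀ y, Filter.Tendsto (fun n => U n y) Filter.atTop (nhds (u y)) := by
    intro y
    rw [Metric.tendsto_atTop]
    intro ε hε
    have hρy := hρpos y
    obtain ⟨n₀, hn₀⟩ := hconv (ε * ρ y / 2) (by positivity)
    refine ⟨n₀, fun n hn => ?_⟩
    have h1 := hn₀ n hn y
    rw [Real.dist_eq]
    nlinarith [abs_nonneg (U n y - u y)]
  -- range f facts
  have hmemf : ∀ t : ℝ, ∀ ht : t ∈ Set.range f, 0 ≤ t ∧ t ≤ M := by
    rintro t ⟨w, rfl⟩; exact ⟨hf0 w, hfM w⟩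
  have hoc : (Set.range f).OrdConnected := by
    rw [← Set.image_univ]
    exact (isPreconnected_univ.image f hfc.continuousOn).ordConnected
  have hgmono : MonotoneOn g (Set.range f) := by
    rintro s ⟨a, rfl⟩ t ⟨b, rfl⟩ hst
    rw [hg, hg]
    exact (hfmono.le_iff_le).mp hst
  have huIcc_sub : ∀ s t : ℝ, s ∈ Set.range f → t ∈ Set.range f →
      Set.uIcc s t ⊆ Set.range f := by
    intro s t hs ht
    exact hoc.uIcc_subset hs ht
  have hg_int_on : ∀ s t : ℝ, s ∈ Set.range f → t ∈ Set.range f →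
      IntegrableOn g (Set.uIcc s t) volume := by
    intro s t hs ht
    exact (hgmono.mono (huIcc_sub s t hs ht)).integrableOn_isCompact isCompact_uIcc
  -- integrability status is constant on range f
  have hstat : ∀ s t : ℝ, s ∈ Set.range f → t ∈ Set.range f →
      IntegrableOn g (Set.Ioc 0 s) volume → IntegrableOn g (Set.Ioc 0 t) volume := by
    intro s t hs ht hint
    have hsub : Set.Ioc 0 t ⊆ Set.Ioc 0 s ∪ Set.uIcc s t := by
      intro r hr
      rcases le_or_gt r s with h1 | h1
      · exact Or.inl ⟨hr.1, h1⟩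
      · exact Or.inr (Set.mem_uIcc.mpr (Or.inl ⟨h1.le, hr.2⟩))
    exact (hint.union (hg_int_on s t hs ht)).mono_set hsub
  -- bound for I on range f
  have hIbdd : ∀ t, t ∈ Set.range f → |I t| ≤ Cg := by
    intro t ht
    obtain ⟨ht0, htM⟩ := hmemf t ht
    by_cases hP : IntegrableOn g (Set.Ioc 0 t) volume
    · have hIt : I t = ∫ r in Set.Ioc 0 t, g r := intervalIntegral.integral_of_le ht0
      rw [hIt, hCgIoc]
      calc |∫ r in Set.Ioc 0 t, g r| ≤ ∫ r in Set.Ioc 0 t, |g r| := by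
            simpa [Real.norm_eq_abs] using
              norm_integral_le_integral_norm (μ := volume.restrict (Set.Ioc 0 t)) g
        _ ≤ ∫ r in Set.Ioc 0 M, |g r| :=
            setIntegral_mono_set habs_g_on
              (Filter.Eventually.of_forall fun r => abs_nonneg _)
              (HasSubset.Subset.eventuallyLE (Set.Ioc_subset_Ioc_right htM))
    · have hIt : I t = 0 := by
        show (∫ r in (0:ℝ)..t, g r) = 0
        rw [intervalIntegral.integral_of_le ht0, integral_undef hP]
      rw [hIt, abs_zero]; exact hCg0
  -- continuity of I on range f
  have hIcont : ContinuousOn I (Set.range f) := by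
    intro t ht
    obtain ⟨w, hw⟩ := ht
    have htr : t ∈ Set.range f := ⟨w, hw⟩
    set t₁ := f (w - 1) with ht1def
    set t₂ := f (w + 1) with ht2def
    have ht1r : t₁ ∈ Set.range f := ⟨w - 1, rfl⟩
    have ht2r : t₂ ∈ Set.range f := ⟨w + 1, rfl⟩
    have ht1 : t₁ < t := by rw [← hw]; exact hfmono (by linarith)
    have ht2 : t < t₂ := by rw [← hw]; exact hfmono (by linarith)
    have hmem : Set.Icc t₁ t₂ ∈ nhds t := Icc_mem_nhds ht1 ht2
    have hIcc_eq : Set.uIcc t₁ t₂ = Set.Icc t₁ t₂ := Set.uIcc_of_le (ht1.trans ht2).le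
    have hsub12 : Set.Icc t₁ t₂ ⊆ Set.range f := by
      have := hoc.uIcc_subset ht1r ht2r
      rwa [hIcc_eq] at this
    by_cases hP : IntegrableOn g (Set.Ioc 0 t) volume
    · have hPall : ∀ s, s ∈ Set.range f → IntegrableOn g (Set.Ioc 0 s) volume :=
        fun s hs => hstat t s htr hs hP
      have hkey : ∀ s ∈ Set.Icc t₁ t₂, I s = I t₁ + ∫ r in t₁..s, g r := by
        intro s hs
        have hsr := hsub12 hs
        have h1 : IntervalIntegrable g volume 0 t₁ :=
          (intervalIntegrable_iff_integrableOn_Ioc_of_le (hmemf _ ht1r).1).mpr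
            (hPall t₁ ht1r)
        have h2 : IntervalIntegrable g volume t₁ s :=
          intervalIntegrable_iff.mpr ((hg_int_on t₁ s ht1r hsr).mono_set Set.uIoc_subset_uIcc)
        show (∫ r in (0:ℝ)..s, g r) = (∫ r in (0:ℝ)..t₁, g r) + ∫ r in t₁..s, g r
        rw [intervalIntegral.integral_add_adjacent_intervals h1 h2]
      have hφ : ContinuousOn (fun s => I t₁ + ∫ r in t₁..s, g r) (Set.Icc t₁ t₂) := by
        refine continuousOn_const.add ?_
        have := intervalIntegral.continuousOn_primitive_interval (μ := volume) (a := t₁) (b := t₂)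
          (by rw [hIcc_eq]; exact (hg_int_on t₁ t₂ ht1r ht2r).mono_set (by rw [hIcc_eq]))
        rwa [hIcc_eq] at this
      have hIon : ContinuousOn I (Set.Icc t₁ t₂) := hφ.congr hkey
      exact (hIon.continuousAt hmem).continuousWithinAt
    · have hzero : ∀ s, s ∈ Set.range f → I s = 0 := by
        intro s hs
        have hns : ¬ IntegrableOn g (Set.Ioc 0 s) volume := fun hc => hP (hstat s t hs htr hc)
        show (∫ r in (0:ℝ)..s, g r) = 0
        rw [intervalIntegral.integral_of_le (hmemf s hs).1, integral_undef hns]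
      exact (continuousWithinAt_const (b := (0:ℝ))).congr (fun y hy => hzero y hy) (hzero t htr)
  -- inner integrability
  have hinner_int : ∀ (x : Fin N → ℝ) (v : (Fin N → ℝ) → ℝ), Continuous v → (∀ y, |v y| ≤ M) →
      Integrable (fun y => J (x - y) * v y * ρ y) := by
    intro x v hv hb
    have h1 : Integrable (fun y => J (x - y)) := hJint.comp_sub_left x
    have h2 : Integrable (fun y => (v y * ρ y) * J (x - y)) := by
      refine h1.bdd_mul (c := M * Cρ) ((hv.mul hρcont).aestronglyMeasurable) (Filter.Eventually.of_forall fun y => ?_)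
      rw [Real.norm_eq_abs, abs_mul, abs_of_nonneg (hρpos y).le]
      exact mul_le_mul (hb y) (hCρ y) (hρpos y).le (le_trans (abs_nonneg _) (hb y))
    exact h2.congr (Filter.Eventually.of_forall fun y => by ring)
  have hM_abs : ∀ t : ℝ, |f t| ≤ M := fun t => by rw [abs_of_nonneg (hf0 t)]; exact hfM t
  -- conv bound
  have hconv_bound : ∀ (x : Fin N → ℝ) (v : (Fin N → ℝ) → ℝ), Continuous v →
      (∀ y, 0 ≤ v y) → (∀ y, v y ≤ M) → |convW J ρ v x| ≤ M * Cρ * KJ := by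
    intro x v hv h0 hM'
    have hb : ∀ y, |v y| ≤ M := fun y => by rw [abs_of_nonneg (h0 y)]; exact hM' y
    have hint := hinner_int x v hv hb
    calc |convW J ρ v x| ≤ ∫ y, |J (x - y) * v y * ρ y| := by
          have := norm_integral_le_integral_norm (μ := volume) (fun y => J (x - y) * v y * ρ y)
          simpa only [convW, Real.norm_eq_abs] using this
      _ ≤ ∫ y, J (x - y) * (M * Cρ) := by
          refine integral_mono hint.abs ((hJint.comp_sub_left x).mul_const _) fun y => ?_
          rw [abs_of_nonneg (mul_nonneg (mul_nonneg (hJpos _) (h0 y)) (hρpos y).le), mul_assoc]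
          exact mul_le_mul_of_nonneg_left
            (mul_le_mul (hM' y) (hCρ y) (hρpos y).le hM0) (hJpos _)
      _ = M * Cρ * KJ := by rw [integral_mul_const, hKJ x]; ring
  -- conv measurable in x
  have hconv_meas : ∀ v : (Fin N → ℝ) → ℝ, Continuous v →
      AEStronglyMeasurable (fun x => convW J ρ v x) volume := by
    intro v hv
    set J' := hJint.aestronglyMeasurable.mk J with hJ'def
    have hJ'm : StronglyMeasurable J' := hJint.aestronglyMeasurable.stronglyMeasurable_mk
    have hJJ' : J =ᵐ[volume] J' := hJint.aestronglyMeasurable.ae_eq_mk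
    have heq : ∀ x, convW J ρ v x = ∫ y, J' (x - y) * v y * ρ y := by
      intro x
      apply integral_congr_ae
      have hmp : MeasurePreserving (fun t : Fin N → ℝ => x - t) volume volume := by
        have h1 : MeasurePreserving (fun t : Fin N → ℝ => -t) volume volume :=
          Measure.measurePreserving_neg volume
        have h2 : MeasurePreserving (fun t : Fin N → ℝ => x + t) volume volume :=
          measurePreserving_add_left volume x
        simpa [Function.comp_def, sub_eq_add_neg] using h2.comp h1
      have h0 : (fun y => J (x - y)) =ᵐ[volume] fun y => J' (x - y) :=
        hmp.quasiMeasurePreserving.ae_eq_comp hJJ'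
      filter_upwards [h0] with y hy
      rw [hy]
    have hF : StronglyMeasurable
        fun p : (Fin N → ℝ) × (Fin N → ℝ) => J' (p.1 - p.2) * v p.2 * ρ p.2 := by
      apply Measurable.stronglyMeasurable
      exact ((hJ'm.measurable.comp (measurable_fst.sub measurable_snd)).mul
        (hv.measurable.comp measurable_snd)).mul (hρcont.measurable.comp measurable_snd)
    exact hF.integral_prod_right'.aestronglyMeasurable.congr
      (Filter.Eventually.of_forall fun x => (heq x).symm)
  -- conv pointwise convergence
  have hconv_tendsto : ∀ x, Filter.Tendsto (fun n => convW J ρ (fun y => f (U n y)) x)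
      Filter.atTop (nhds (convW J ρ (fun y => f (u y)) x)) := by
    intro x
    simp only [convW]
    apply tendsto_integral_of_dominated_convergence (bound := fun y => J (x - y) * (M * Cρ))
    · intro n
      exact (hinner_int x _ (hfc.comp (hUc n)) (fun y => hM_abs _)).aestronglyMeasurable
    · exact (hJint.comp_sub_left x).mul_const _
    · intro n
      refine Filter.Eventually.of_forall fun y => ?_
      rw [Real.norm_eq_abs,
        abs_of_nonneg (mul_nonneg (mul_nonneg (hJpos _) (hf0 _)) (hρpos y).le), mul_assoc]
      exact mul_le_mul_of_nonneg_left (mul_le_mul (hfM _) (hCρ y) (hρpos y).le hM0) (hJpos _)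
    · refine Filter.Eventually.of_forall fun y => ?_
      exact ((((hfc.tendsto _).comp (hUptw y)).const_mul _)).mul_const _
  -- measurability of the full integrand
  have hmainint : ∀ v : (Fin N → ℝ) → ℝ, Continuous v →
      AEStronglyMeasurable (fun x => (-(1/2) * f (v x) * convW J ρ (fun y => f (v y)) x
        + I (f (v x)) - h x * f (v x)) * ρ x) volume := by
    intro v hv
    have hIc : Continuous fun x => I (f (v x)) :=
      hIcont.comp_continuous (hfc.comp hv) fun x => Set.mem_range_self _
    refine AEStronglyMeasurable.mul ?_ hρcont.aestronglyMeasurable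
    refine AEStronglyMeasurable.sub (AEStronglyMeasurable.add ?_ hIc.aestronglyMeasurable)
      ((hhcont.mul (hfc.comp hv)).aestronglyMeasurable)
    exact (continuous_const.mul (hfc.comp hv)).aestronglyMeasurable.mul
      (hconv_meas _ (hfc.comp hv))
  -- uniform bound of the integrand
  have hbound : ∀ v : (Fin N → ℝ) → ℝ, Continuous v → ∀ x,
      |(-(1/2) * f (v x) * convW J ρ (fun y => f (v y)) x + I (f (v x)) - h x * f (v x)) * ρ x|
        ≤ ((1/2) * M * (M * Cρ * KJ) + Cg + Ch * M) * ρ x := by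
    intro v hv x
    rw [abs_mul, abs_of_nonneg (hρpos x).le]
    refine mul_le_mul_of_nonneg_right ?_ (hρpos x).le
    have h1 : |-(1/2) * f (v x) * convW J ρ (fun y => f (v y)) x|
        ≤ (1/2) * M * (M * Cρ * KJ) := by
      rw [abs_mul, abs_mul]
      have hc := hconv_bound x _ (hfc.comp hv) (fun y => hf0 _) (fun y => hfM _)
      have h2 : |(-(1/2):ℝ)| = 1/2 := by norm_num
      rw [h2]
      exact mul_le_mul (mul_le_mul_of_nonneg_left (hM_abs _) (by norm_num)) hc
        (abs_nonneg _) (by positivity)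
    have h3 : |I (f (v x))| ≤ Cg := hIbdd _ (Set.mem_range_self _)
    have h4 : |h x * f (v x)| ≤ Ch * M := by
      rw [abs_mul]; exact mul_le_mul (hCh x) (hM_abs _) (abs_nonneg _) hCh0
    set A := -(1/2) * f (v x) * convW J ρ (fun y => f (v y)) x
    set B := I (f (v x))
    set C := h x * f (v x)
    have habs : |A + B - C| ≤ |A| + |B| + |C| := by
      have t1 := abs_add_le (A + B) (-C)
      have t2 := abs_add_le A B
      rw [abs_neg] at t1
      rw [sub_eq_add_neg]
      linarith
    linarith
  -- final dominated convergence
  show Filter.Tendsto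
      (fun n => ∫ x, (-(1/2) * f (U n x) * convW J ρ (fun y => f (U n y)) x
        + I (f (U n x)) - h x * f (U n x)) * ρ x) Filter.atTop
      (nhds (∫ x, (-(1/2) * f (u x) * convW J ρ (fun y => f (u y)) x
        + I (f (u x)) - h x * f (u x)) * ρ x))
  apply tendsto_integral_of_dominated_convergence
    (bound := fun x => ((1/2) * M * (M * Cρ * KJ) + Cg + Ch * M) * ρ x)
  · intro n; exact hmainint (U n) (hUc n)
  · exact hρint.const_mul _
  · intro n
    exact Filter.Eventually.of_forall fun x => by
      rw [Real.norm_eq_abs]; exact hbound (U n) (hUc n) x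
  · refine Filter.Eventually.of_forall fun x => ?_
    have T1 : Filter.Tendsto (fun n => f (U n x)) Filter.atTop (nhds (f (u x))) :=
      (hfc.tendsto _).comp (hUptw x)
    have T2 := hconv_tendsto x
    have T3 : Filter.Tendsto (fun n => I (f (U n x))) Filter.atTop (nhds (I (f (u x)))) := by
      have hW : Filter.Tendsto (fun n => f (U n x)) Filter.atTop
          (nhdsWithin (f (u x)) (Set.range f)) :=
        tendsto_nhdsWithin_of_tendsto_nhds_of_eventually_within _ T1
          (Filter.Eventually.of_forall fun n => Set.mem_range_self _)
      exact ((hIcont _ (Set.mem_range_self _)).tendsto.comp hW)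
    exact ((((T1.const_mul (-(1/2))).mul T2).add T3).sub (T1.const_mul (h x))).mul_const (ρ x)
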